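/- When all agents' valuations are binary and linear, for every symmetric strictly convex function Φ : ℝ^N → ℝ there exists a Φ-fair allocation of the mixed goods (and one can choose it to satisfy condition (*)). -/

import Mathlib

open MeasureTheory

/-- The interval `I_j = [j/ℓ, (j+1)/ℓ) ⊆ [0,1)` representing the `j`-th of the
`ℓ` divisible goods (so that `I_1, …, I_ℓ` partition the cake `C = [0,1)`). -/
def dgInterval (l : ℕ) (j : Fin l) : Set ℝ :=
  Set.Ico ((j : ℝ) / l) (((j : ℝ) + 1) / l)

/-- An allocation of `m` indivisible goods and of the cake `[0,1)` among `n` agents: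
the indivisible goods are partitioned into the bundles `ind i`, and the cake `[0,1)`
is partitioned into the measurable (Borel) pieces `piece i`. -/
structure Alloc (n m : ℕ) where
  ind : Fin n → Finset (Fin m)
  piece : Fin n → Set ℝ
  ind_partition : ∀ g : Fin m, ∃! i : Fin n, g ∈ ind i
  piece_measurable : ∀ i, MeasurableSet (piece i)
  piece_disjoint : ∀ i j : Fin n, i ≠ j → piece i ∩ piece j = ∅
  piece_cover : (⋃ i, piece i) = Set.Ico (0 : ℝ) 1

section

variable {n m l : ℕ} (vM : Fin n → Fin m → ℝ) (vC : Fin n → Fin l → ℝ)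

/-- Additive value of agent `i` for a set `S` of indivisible goods. -/
def valInd (i : Fin n) (S : Finset (Fin m)) : ℝ := ∑ g ∈ S, vM i g

/-- Linear value of agent `i` for a piece `S` of the cake:
`u_i(S) = ∑_j u_i(c_j) · μ(S ∩ I_j)` where `μ` is the Lebesgue measure. -/
noncomputable def valDiv (i : Fin n) (S : Set ℝ) : ℝ :=
  ∑ j : Fin l, vC i j * (volume (S ∩ dgInterval l j)).toReal

/-- Value of agent `i` for agent `j`'s bundle `A_j = M_j ∪ C_j` in allocation `A`. -/
noncomputable def valOn (A : Alloc n m) (i j : Fin n) : ℝ :=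
  valInd vM i (A.ind j) + valDiv vC i (A.piece j)

/-- Utility of agent `i` in allocation `A`: `u_i(A_i) = u_i(M_i) + u_i(C_i)`. -/
noncomputable def util (A : Alloc n m) (i : Fin n) : ℝ := valOn vM vC A i i

/-- An allocation is utilitarian optimal if it maximizes the total sum of utilities. -/
def UtilOpt (A : Alloc n m) : Prop :=
  ∀ A' : Alloc n m, (∑ i, util vM vC A' i) ≤ ∑ i, util vM vC A i

/-- An allocation is `Φ`-fair if its utility vector minimizes `Φ` among the utility
vectors of utilitarian optimal allocations. -/
def PhiFair (Φ : (Fin n → ℝ) → ℝ) (A : Alloc n m) : Prop :=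
  UtilOpt vM vC A ∧
    ∀ A' : Alloc n m, UtilOpt vM vC A' → Φ (util vM vC A) ≤ Φ (util vM vC A')

/-- Pareto optimality: no allocation gives every agent at least as much utility
and some agent strictly more. -/
def PO (A : Alloc n m) : Prop :=
  ¬ ∃ A' : Alloc n m,
      (∀ i, util vM vC A i ≤ util vM vC A' i) ∧ ∃ i, util vM vC A i < util vM vC A' i

/-- Envy-freeness up to any good for mixed goods (EFXM): for all agents `i, j`,
if `C_j = ∅` then `u_i(A_i) ≥ u_i(A_j)` or `u_i(A_i) ≥ u_i(A_j \ {g})` for every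
indivisible good `g ∈ A_j`; otherwise `u_i(A_i) ≥ u_i(A_j)`. -/
def EFXM (A : Alloc n m) : Prop :=
  ∀ i j : Fin n,
    (A.piece j = ∅ →
      (valOn vM vC A i j ≤ util vM vC A i ∨
        ∀ g ∈ A.ind j,
          valInd vM i (A.ind j \ {g}) + valDiv vC i (A.piece j) ≤ util vM vC A i)) ∧
    (A.piece j ≠ ∅ → valOn vM vC A i j ≤ util vM vC A i)

end

/-- Condition (*): each agent's piece of each divisible good is either empty or of
positive Lebesgue measure. -/
def CondStar {n m : ℕ} (l : ℕ) (A : Alloc n m) : Prop :=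
  ∀ (i : Fin n) (j : Fin l),
    A.piece i ∩ dgInterval l j = ∅ ∨ 0 < volume (A.piece i ∩ dgInterval l j)

namespace PFA

open Finset Set

open Classical in
noncomputable def mx {n k : ℕ} (v : Fin n → Fin k → ℝ) (g : Fin k) : ℝ :=
  if ∃ i, v i g = 1 then 1 else 0

lemma mx_nonneg {n k : ℕ} (v : Fin n → Fin k → ℝ) (g : Fin k) : 0 ≤ mx v g := by
  unfold mx; split <;> norm_num

lemma mx_cases {n k : ℕ} (v : Fin n → Fin k → ℝ) (g : Fin k) :
    mx v g = 0 ∨ mx v g = 1 := by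
  unfold mx; split <;> simp

lemma mx_eq_one {n k : ℕ} {v : Fin n → Fin k → ℝ} {g : Fin k} {i : Fin n}
    (h : v i g = 1) : mx v g = 1 := by
  unfold mx; rw [if_pos ⟨i, h⟩]

lemma le_mx {n k : ℕ} {v : Fin n → Fin k → ℝ} (hbin : ∀ i g, v i g = 0 ∨ v i g = 1)
    (i : Fin n) (g : Fin k) : v i g ≤ mx v g := by
  rcases hbin i g with h | h
  · rw [h]; exact mx_nonneg v g
  · rw [h, mx_eq_one h]

lemma mx_eq_zero {n k : ℕ} {v : Fin n → Fin k → ℝ} {g : Fin k}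
    (hbin : ∀ i g, v i g = 0 ∨ v i g = 1) (h : mx v g = 0) (i : Fin n) : v i g = 0 := by
  rcases hbin i g with h' | h'
  · exact h'
  · rw [mx_eq_one h'] at h; norm_num at h

section intervals

variable {l : ℕ}

lemma lpos (j : Fin l) : (0 : ℝ) < l := by
  have h : 0 < l := Nat.lt_of_le_of_lt (Nat.zero_le _) j.isLt
  exact_mod_cast h

lemma dgInterval_subset (j : Fin l) : dgInterval l j ⊆ Set.Ico (0 : ℝ) 1 := by
  have hl := lpos j
  have hj1 : ((j : ℝ) + 1) ≤ l := by exact_mod_cast Nat.succ_le_of_lt j.isLt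
  intro x hx
  rcases hx with ⟨h1, h2⟩
  constructor
  · have : (0 : ℝ) ≤ (j : ℝ) / l := by positivity
    linarith
  · have : ((j : ℝ) + 1) / l ≤ 1 := by
      rw [div_le_one hl]; exact hj1
    linarith

lemma dgInterval_disjoint_aux (j j' : Fin l) (h : (j : ℕ) < (j' : ℕ)) :
    dgInterval l j ∩ dgInterval l j' = ∅ := by
  have hl := lpos j
  apply Set.eq_empty_iff_forall_notMem.2
  rintro x ⟨⟨_, h2⟩, ⟨h3, _⟩⟩
  have : ((j : ℝ) + 1) ≤ (j' : ℝ) := by exact_mod_cast Nat.succ_le_of_lt h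
  have : ((j : ℝ) + 1) / l ≤ (j' : ℝ) / l := by gcongr
  linarith

lemma dgInterval_disjoint {j j' : Fin l} (h : j ≠ j') :
    dgInterval l j ∩ dgInterval l j' = ∅ := by
  rcases lt_or_gt_of_ne (fun hc => h (Fin.ext hc) : (j : ℕ) ≠ (j' : ℕ)) with h' | h'
  · exact dgInterval_disjoint_aux j j' h'
  · rw [Set.inter_comm]; exact dgInterval_disjoint_aux j' j h'

lemma volume_dgInterval (j : Fin l) :
    volume (dgInterval l j) = ENNReal.ofReal (1 / l) := by
  have hl := lpos j
  rw [dgInterval, Real.volume_Ico]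
  congr 1
  field_simp
  ring

lemma iUnion_dgInterval (hl : 0 < l) : (⋃ j : Fin l, dgInterval l j) = Set.Ico (0 : ℝ) 1 := by
  apply Set.Subset.antisymm
  · exact Set.iUnion_subset fun j => dgInterval_subset j
  · rintro x ⟨hx0, hx1⟩
    have hlR : (0 : ℝ) < l := by exact_mod_cast hl
    set k : ℤ := ⌊x * l⌋ with hk
    have hk0 : 0 ≤ k := Int.floor_nonneg.2 (by positivity)
    have hkl : k < l := by
      have : x * l < l := by nlinarith
      exact Int.floor_lt.2 (by exact_mod_cast this)
    have hklN : k.toNat < l := by omega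
    refine Set.mem_iUnion.2 ⟨⟨k.toNat, hklN⟩, ?_, ?_⟩
    · have h1 : (k : ℝ) ≤ x * l := Int.floor_le _
      have : ((⟨k.toNat, hklN⟩ : Fin l) : ℝ) = (k : ℝ) := by
        exact_mod_cast congrArg Int.cast (Int.toNat_of_nonneg hk0)
      rw [this, div_le_iff₀ hlR]
      linarith
    · have h2 : x * l < (k : ℝ) + 1 := Int.lt_floor_add_one _
      have : ((⟨k.toNat, hklN⟩ : Fin l) : ℝ) = (k : ℝ) := by
        exact_mod_cast congrArg Int.cast (Int.toNat_of_nonneg hk0)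
      rw [this, lt_div_iff₀ hlR]
      linarith

end intervals

end PFA

namespace PFA

open Finset Set

section alloc

variable {n m l : ℕ}

noncomputable def owner (A : Alloc n m) (g : Fin m) : Fin n :=
  (A.ind_partition g).exists.choose

lemma owner_mem (A : Alloc n m) (g : Fin m) : g ∈ A.ind (owner A g) :=
  (A.ind_partition g).exists.choose_spec

lemma owner_eq (A : Alloc n m) {g : Fin m} {i : Fin n} (h : g ∈ A.ind i) :
    owner A g = i :=
  (A.ind_partition g).unique (owner_mem A g) h

lemma ind_eq_filter (A : Alloc n m) (i : Fin n) :
    A.ind i = univ.filter (fun g => owner A g = i) := by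
  ext g
  rw [Finset.mem_filter]
  constructor
  · exact fun h => ⟨Finset.mem_univ g, owner_eq A h⟩
  · rintro ⟨-, rfl⟩; exact owner_mem A g

lemma dg_measurable {l : ℕ} (j : Fin l) : MeasurableSet (dgInterval l j) :=
  measurableSet_Ico

lemma vol_ne_top (A : Alloc n m) (i : Fin n) (j : Fin l) :
    volume (A.piece i ∩ dgInterval l j) ≠ ⊤ := by
  have h : volume (A.piece i ∩ dgInterval l j) ≤ volume (dgInterval l j) :=
    measure_mono Set.inter_subset_right
  rw [volume_dgInterval] at h
  exact (h.trans_lt ENNReal.ofReal_lt_top).ne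

lemma col_sum (A : Alloc n m) (j : Fin l) :
    ∑ i, (volume (A.piece i ∩ dgInterval l j)).toReal = 1 / l := by
  have hdis : Pairwise (Function.onFun Disjoint fun i => A.piece i ∩ dgInterval l j) := by
    intro i i' hne
    refine Set.disjoint_iff_inter_eq_empty.2 ?_
    have h := A.piece_disjoint i i' hne
    apply Set.eq_empty_iff_forall_notMem.2
    rintro x ⟨⟨h1, _⟩, ⟨h2, _⟩⟩
    exact absurd (Set.mem_inter h1 h2) (h ▸ Set.notMem_empty x)
  have hm : ∀ i, MeasurableSet (A.piece i ∩ dgInterval l j) :=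
    fun i => (A.piece_measurable i).inter (dg_measurable j)
  have hU : (⋃ i, A.piece i ∩ dgInterval l j) = dgInterval l j := by
    rw [← Set.iUnion_inter, A.piece_cover,
      Set.inter_eq_self_of_subset_right (dgInterval_subset j)]
  have h1 : ∑ i, volume (A.piece i ∩ dgInterval l j) = ENNReal.ofReal (1 / l) := by
    rw [← tsum_fintype (L := SummationFilter.unconditional _), ← measure_iUnion hdis hm, hU, volume_dgInterval]
  have h2 := congrArg ENNReal.toReal h1
  rw [ENNReal.toReal_sum (fun i _ => vol_ne_top A i j)] at h2
  rw [h2, ENNReal.toReal_ofReal (by positivity)]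

variable (vM : Fin n → Fin m → ℝ) (vC : Fin n → Fin l → ℝ)

noncomputable def maxTot : ℝ := (∑ g, mx vM g) + ∑ j, mx vC j * (1 / l)

lemma sum_valInd (A : Alloc n m) :
    ∑ i, valInd vM i (A.ind i) = ∑ g, vM (owner A g) g := by
  have : ∀ i, valInd vM i (A.ind i)
      = ∑ g ∈ univ.filter (fun g => owner A g = i), vM (owner A g) g := by
    intro i
    rw [valInd, ind_eq_filter]
    exact Finset.sum_congr rfl fun g hg => by
      rw [(Finset.mem_filter.1 hg).2]
  simp_rw [this]
  exact Finset.sum_fiberwise univ (owner A) (fun g => vM (owner A g) g)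

lemma sum_valDiv (A : Alloc n m) :
    ∑ i, valDiv vC i (A.piece i)
      = ∑ j, ∑ i, vC i j * (volume (A.piece i ∩ dgInterval l j)).toReal := by
  rw [Finset.sum_comm]
  rfl

lemma sum_util_split (A : Alloc n m) :
    ∑ i, util vM vC A i
      = (∑ g, vM (owner A g) g)
        + ∑ j, ∑ i, vC i j * (volume (A.piece i ∩ dgInterval l j)).toReal := by
  have : ∑ i, util vM vC A i
      = (∑ i, valInd vM i (A.ind i)) + ∑ i, valDiv vC i (A.piece i) := by
    rw [← Finset.sum_add_distrib]; rfl
  rw [this, sum_valInd, sum_valDiv]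

lemma divcol_le (hbinC : ∀ i j, vC i j = 0 ∨ vC i j = 1) (A : Alloc n m) (j : Fin l) :
    ∑ i, vC i j * (volume (A.piece i ∩ dgInterval l j)).toReal ≤ mx vC j * (1 / l) := by
  calc ∑ i, vC i j * (volume (A.piece i ∩ dgInterval l j)).toReal
      ≤ ∑ i, mx vC j * (volume (A.piece i ∩ dgInterval l j)).toReal := by
        refine Finset.sum_le_sum fun i _ => ?_
        exact mul_le_mul_of_nonneg_right (le_mx hbinC i j) ENNReal.toReal_nonneg
    _ = mx vC j * (1 / l) := by rw [← Finset.mul_sum, col_sum]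

lemma sum_util_le (hbinM : ∀ i g, vM i g = 0 ∨ vM i g = 1)
    (hbinC : ∀ i j, vC i j = 0 ∨ vC i j = 1) (A : Alloc n m) :
    ∑ i, util vM vC A i ≤ maxTot vM vC := by
  rw [sum_util_split, maxTot]
  gcongr with g _ j _
  · exact le_mx hbinM _ g
  · exact divcol_le vC hbinC A j

end alloc

section construct

variable {n m l : ℕ}

noncomputable def xe (x : Fin n → Fin l → ℝ) (j : Fin l) (i : ℕ) : ℝ :=
  if h : i < n then x ⟨i, h⟩ j else 0

noncomputable def ps (x : Fin n → Fin l → ℝ) (j : Fin l) (k : ℕ) : ℝ :=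
  ∑ i ∈ Finset.range k, xe x j i

variable {x : Fin n → Fin l → ℝ}

lemma xe_nonneg (hx0 : ∀ i j, 0 ≤ x i j) (j : Fin l) (i : ℕ) : 0 ≤ xe x j i := by
  unfold xe; split
  · exact hx0 _ _
  · exact le_refl 0

lemma xe_fin (i : Fin n) (j : Fin l) : xe x j i = x i j := by
  unfold xe; rw [dif_pos i.isLt]

lemma ps_mono (hx0 : ∀ i j, 0 ≤ x i j) (j : Fin l) : Monotone (ps x j) := by
  intro a b hab
  exact Finset.sum_le_sum_of_subset_of_nonneg (Finset.range_subset_range.2 hab)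
    (fun i _ _ => xe_nonneg hx0 j i)

lemma ps_zero (j : Fin l) : ps x j 0 = 0 := by simp [ps]

lemma ps_top (hxs : ∀ j, ∑ i, x i j = 1 / (l : ℝ)) (j : Fin l) : ps x j n = 1 / l := by
  rw [ps, Finset.sum_range (fun i => xe x j i),
    show (∑ i : Fin n, xe x j (i : ℕ)) = ∑ i : Fin n, x i j from
      Finset.sum_congr rfl fun i _ => xe_fin i j]
  exact hxs j

noncomputable def lo (x : Fin n → Fin l → ℝ) (j : Fin l) (k : ℕ) : ℝ :=
  (j : ℝ) / l + ps x j k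

noncomputable def pieceOf (x : Fin n → Fin l → ℝ) (i : Fin n) : Set ℝ :=
  ⋃ j : Fin l, Set.Ico (lo x j i) (lo x j (i + 1))

lemma lo_sub (i : Fin n) (j : Fin l) : lo x j ((i : ℕ) + 1) - lo x j i = x i j := by
  unfold lo ps
  rw [Finset.sum_range_succ, xe_fin]
  ring

lemma Ico_subset_dg (hx0 : ∀ i j, 0 ≤ x i j) (hxs : ∀ j, ∑ i, x i j = 1 / (l : ℝ))
    (j : Fin l) (i : Fin n) :
    Set.Ico (lo x j i) (lo x j ((i : ℕ) + 1)) ⊆ dgInterval l j := by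
  have hl := lpos j
  rw [dgInterval]
  apply Set.Ico_subset_Ico
  · unfold lo
    have : 0 ≤ ps x j i := by
      rw [← ps_zero (x := x) j]; exact ps_mono hx0 j (Nat.zero_le _)
    linarith
  · unfold lo
    have h1 : ps x j ((i : ℕ) + 1) ≤ ps x j n := ps_mono hx0 j i.isLt
    rw [ps_top hxs j] at h1
    have : (j : ℝ) / l + 1 / l = ((j : ℝ) + 1) / l := by field_simp
    linarith

lemma iUnion_Ico_nat (S : ℕ → ℝ) (hS : Monotone S) (k : ℕ) :
    (⋃ i ∈ Finset.range k, Set.Ico (S i) (S (i + 1))) = Set.Ico (S 0) (S k) := by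
  induction k with
  | zero => simp
  | succ k ih =>
    rw [Finset.range_add_one, Finset.set_biUnion_insert, ih, Set.union_comm,
      Set.Ico_union_Ico_eq_Ico (hS (Nat.zero_le k)) (hS (Nat.le_succ k))]

lemma iUnion_Ico_fin (S : ℕ → ℝ) (hS : Monotone S) (k : ℕ) :
    (⋃ i : Fin k, Set.Ico (S i) (S ((i : ℕ) + 1))) = Set.Ico (S 0) (S k) := by
  rw [← iUnion_Ico_nat S hS k]
  ext y
  simp only [Set.mem_iUnion, Finset.mem_range]
  constructor
  · rintro ⟨i, hi⟩; exact ⟨i, i.isLt, hi⟩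
  · rintro ⟨i, hik, hi⟩; exact ⟨⟨i, hik⟩, hi⟩

lemma iUnion_piece_slice (hx0 : ∀ i j, 0 ≤ x i j) (hxs : ∀ j, ∑ i, x i j = 1 / (l : ℝ))
    (j : Fin l) :
    (⋃ i : Fin n, Set.Ico (lo x j i) (lo x j ((i : ℕ) + 1))) = dgInterval l j := by
  have hl := lpos j
  have hmono : Monotone (lo x j) := fun a b hab => by
    unfold lo; have := ps_mono hx0 j hab; linarith
  rw [iUnion_Ico_fin (lo x j) hmono n]
  unfold lo
  rw [ps_zero, ps_top hxs j, dgInterval]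
  have h0 : (j : ℝ) / l + 0 = (j : ℝ) / l := by ring
  have h1 : (j : ℝ) / l + 1 / l = ((j : ℝ) + 1) / l := by field_simp
  rw [h0, h1]

lemma key_disj (hx0 : ∀ i j, 0 ≤ x i j) (j : Fin l) (a b : Fin n) (hab : (a : ℕ) < (b : ℕ))
    (y : ℝ) (hy1 : y ∈ Set.Ico (lo x j a) (lo x j ((a : ℕ) + 1)))
    (hy2 : y ∈ Set.Ico (lo x j b) (lo x j ((b : ℕ) + 1))) : False := by
  have h : lo x j ((a : ℕ) + 1) ≤ lo x j b := by
    unfold lo; have := ps_mono hx0 j (show (a : ℕ) + 1 ≤ b from hab); linarith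
  rcases hy1 with ⟨_, h2⟩
  rcases hy2 with ⟨h3, _⟩
  linarith

lemma pieceOf_disjoint (hx0 : ∀ i j, 0 ≤ x i j) (hxs : ∀ j, ∑ i, x i j = 1 / (l : ℝ))
    (a b : Fin n) (hab : a ≠ b) : pieceOf x a ∩ pieceOf x b = ∅ := by
  apply Set.eq_empty_iff_forall_notMem.2
  rintro y ⟨hy1, hy2⟩
  obtain ⟨j, hj⟩ := Set.mem_iUnion.1 hy1
  obtain ⟨j', hj'⟩ := Set.mem_iUnion.1 hy2
  by_cases hjj : j = j'
  · subst hjj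
    rcases lt_or_gt_of_ne (fun hc => hab (Fin.ext hc) : (a : ℕ) ≠ (b : ℕ)) with h | h
    · exact key_disj hx0 j a b h y hj hj'
    · exact key_disj hx0 j b a h y hj' hj
  · have h1 := Ico_subset_dg hx0 hxs j a hj
    have h2 := Ico_subset_dg hx0 hxs j' b hj'
    have := dgInterval_disjoint hjj
    exact absurd (Set.mem_inter h1 h2) (this ▸ Set.notMem_empty y)

lemma pieceOf_inter (hx0 : ∀ i j, 0 ≤ x i j) (hxs : ∀ j, ∑ i, x i j = 1 / (l : ℝ))
    (i : Fin n) (j : Fin l) :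
    pieceOf x i ∩ dgInterval l j = Set.Ico (lo x j i) (lo x j ((i : ℕ) + 1)) := by
  apply Set.Subset.antisymm
  · rintro y ⟨hy1, hy2⟩
    obtain ⟨j', hj'⟩ := Set.mem_iUnion.1 hy1
    by_cases hjj : j' = j
    · subst hjj; exact hj'
    · have h1 := Ico_subset_dg hx0 hxs j' i hj'
      have := dgInterval_disjoint hjj
      exact absurd (Set.mem_inter h1 hy2) (this ▸ Set.notMem_empty y)
  · intro y hy
    exact ⟨Set.mem_iUnion.2 ⟨j, hy⟩, Ico_subset_dg hx0 hxs j i hy⟩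

lemma vol_pieceOf (hx0 : ∀ i j, 0 ≤ x i j) (hxs : ∀ j, ∑ i, x i j = 1 / (l : ℝ))
    (i : Fin n) (j : Fin l) :
    volume (pieceOf x i ∩ dgInterval l j) = ENNReal.ofReal (x i j) := by
  rw [pieceOf_inter hx0 hxs, Real.volume_Ico, lo_sub]

noncomputable def mkAlloc (hl : 0 < l) (f : Fin m → Fin n)
    (x : Fin n → Fin l → ℝ) (hx0 : ∀ i j, 0 ≤ x i j)
    (hxs : ∀ j, ∑ i, x i j = 1 / (l : ℝ)) : Alloc n m where
  ind i := Finset.univ.filter (fun g => f g = i)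
  piece i := pieceOf x i
  ind_partition g := by
    refine ⟨f g, by simp, fun i hi => ?_⟩
    exact ((Finset.mem_filter.1 hi).2).symm
  piece_measurable i := MeasurableSet.iUnion fun j => measurableSet_Ico
  piece_disjoint a b hab := pieceOf_disjoint hx0 hxs a b hab
  piece_cover := by
    unfold pieceOf
    rw [Set.iUnion_comm]
    calc (⋃ j : Fin l, ⋃ i : Fin n, Set.Ico (lo x j i) (lo x j ((i : ℕ) + 1)))
        = ⋃ j : Fin l, dgInterval l j := by
          exact Set.iUnion_congr fun j => iUnion_piece_slice hx0 hxs j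
      _ = Set.Ico (0 : ℝ) 1 := iUnion_dgInterval hl

end construct

section opt

variable {n m l : ℕ} (vM : Fin n → Fin m → ℝ) (vC : Fin n → Fin l → ℝ)

def OptF (f : Fin m → Fin n) : Prop := ∀ g, vM (f g) g = mx vM g

def XS : Set (Fin n → Fin l → ℝ) :=
  {x | (∀ i j, 0 ≤ x i j) ∧ (∀ j, ∑ i, x i j = 1 / (l : ℝ)) ∧
    (∀ i j, vC i j = 0 → mx vC j = 1 → x i j = 0)}

noncomputable def Psi (f : Fin m → Fin n) (x : Fin n → Fin l → ℝ) : Fin n → ℝ :=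
  fun i => (∑ g ∈ Finset.univ.filter (fun g => f g = i), vM i g) + ∑ j, vC i j * x i j

lemma util_mkAlloc (hl : 0 < l) (f : Fin m → Fin n) {x : Fin n → Fin l → ℝ}
    (hx0 : ∀ i j, 0 ≤ x i j) (hxs : ∀ j, ∑ i, x i j = 1 / (l : ℝ)) :
    util vM vC (mkAlloc hl f x hx0 hxs) = Psi vM vC f x := by
  funext i
  show valInd vM i _ + valDiv vC i _ = _
  unfold Psi
  congr 1
  refine Finset.sum_congr rfl fun j _ => ?_
  show vC i j * (volume (pieceOf x i ∩ dgInterval l j)).toReal = _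
  rw [vol_pieceOf hx0 hxs, ENNReal.toReal_ofReal (hx0 i j)]

lemma Xcol (hbinC : ∀ i j, vC i j = 0 ∨ vC i j = 1) {x : Fin n → Fin l → ℝ}
    (hx : x ∈ XS vC) (j : Fin l) :
    ∑ i, vC i j * x i j = mx vC j * (1 / l) := by
  obtain ⟨hx0, hxs, hxz⟩ := hx
  have hterm : ∀ i, vC i j * x i j = mx vC j * x i j := by
    intro i
    rcases hbinC i j with h | h
    · rcases mx_cases vC j with hm | hm
      · rw [h, hm]
      · rw [h, hxz i j h hm]; ring
    · rw [h, mx_eq_one h]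
  rw [Finset.sum_congr rfl (fun i _ => hterm i), ← Finset.mul_sum, hxs j]

lemma sum_Psi (hbinC : ∀ i j, vC i j = 0 ∨ vC i j = 1)
    {f : Fin m → Fin n} (hf : OptF vM f) {x : Fin n → Fin l → ℝ} (hx : x ∈ XS vC) :
    ∑ i, Psi vM vC f x i = maxTot vM vC := by
  unfold Psi maxTot
  rw [Finset.sum_add_distrib]
  congr 1
  · have h1 : ∀ i, ∑ g ∈ Finset.univ.filter (fun g => f g = i), vM i g
        = ∑ g ∈ Finset.univ.filter (fun g => f g = i), vM (f g) g :=
      fun i => Finset.sum_congr rfl fun g hg => by rw [(Finset.mem_filter.1 hg).2]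
    simp_rw [h1]
    rw [Finset.sum_fiberwise Finset.univ f (fun g => vM (f g) g)]
    exact Finset.sum_congr rfl fun g _ => hf g
  · rw [Finset.sum_comm]
    exact Finset.sum_congr rfl fun j _ => Xcol vC hbinC hx j

lemma util_decomp (hbinM : ∀ i g, vM i g = 0 ∨ vM i g = 1)
    (hbinC : ∀ i j, vC i j = 0 ∨ vC i j = 1) (A : Alloc n m)
    (hopt : ∑ i, util vM vC A i = maxTot vM vC) :
    OptF vM (owner A) ∧
      (fun i j => (volume (A.piece i ∩ dgInterval l j)).toReal) ∈ XS vC ∧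
      util vM vC A
        = Psi vM vC (owner A) (fun i j => (volume (A.piece i ∩ dgInterval l j)).toReal) := by
  have hsplit := sum_util_split vM vC A
  have hIle : ∑ g, vM (owner A g) g ≤ ∑ g, mx vM g :=
    Finset.sum_le_sum fun g _ => le_mx hbinM _ g
  have hDle : ∀ j : Fin l, ∑ i, vC i j * (volume (A.piece i ∩ dgInterval l j)).toReal
      ≤ mx vC j * (1 / l) := fun j => divcol_le vC hbinC A j
  have hDle' : ∑ j : Fin l, ∑ i, vC i j * (volume (A.piece i ∩ dgInterval l j)).toReal
      ≤ ∑ j, mx vC j * (1 / l) := Finset.sum_le_sum fun j _ => hDle j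
  rw [maxTot, hsplit] at hopt
  have hIeq : ∑ g, vM (owner A g) g = ∑ g, mx vM g := by linarith
  have hDeq : ∑ j : Fin l, ∑ i, vC i j * (volume (A.piece i ∩ dgInterval l j)).toReal
      = ∑ j, mx vC j * (1 / l) := by linarith
  have hIg := (Finset.sum_eq_sum_iff_of_le (fun g _ => le_mx hbinM (owner A g) g)).1 hIeq
  have hDj := (Finset.sum_eq_sum_iff_of_le (fun j _ => hDle j)).1 hDeq
  refine ⟨fun g => hIg g (Finset.mem_univ g), ⟨?_, ?_, ?_⟩, ?_⟩
  · intro i j; exact ENNReal.toReal_nonneg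
  · intro j; exact col_sum A j
  · intro i j hv hm
    have h1 : ∑ i, vC i j * (volume (A.piece i ∩ dgInterval l j)).toReal
        = ∑ i, mx vC j * (volume (A.piece i ∩ dgInterval l j)).toReal := by
      rw [hDj j (Finset.mem_univ j), ← Finset.mul_sum, col_sum]
    have h2 := (Finset.sum_eq_sum_iff_of_le (fun i _ =>
      mul_le_mul_of_nonneg_right (le_mx hbinC i j) ENNReal.toReal_nonneg)).1 h1
      i (Finset.mem_univ i)
    rw [hv, hm] at h2
    have h3 : (0 : ℝ) = (volume (A.piece i ∩ dgInterval l j)).toReal := by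
      simpa using h2
    exact h3.symm
  · funext i
    show valInd vM i (A.ind i) + valDiv vC i (A.piece i) = _
    unfold Psi
    congr 1
    rw [valInd, ind_eq_filter]

lemma Psi_continuous (f : Fin m → Fin n) : Continuous (Psi vM vC f) := by
  apply continuous_pi
  intro i
  apply Continuous.add continuous_const
  exact continuous_finset_sum _ fun j _ =>
    continuous_const.mul ((continuous_apply j).comp (continuous_apply i))

lemma XS_closed : IsClosed (XS (n := n) (l := l) vC) := by
  have hc : ∀ (i : Fin n) (j : Fin l),
      Continuous fun x : Fin n → Fin l → ℝ => x i j :=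
    fun i j => (continuous_apply j).comp (continuous_apply i)
  have h1 : XS (n := n) (l := l) vC
      = (⋂ j, {x : Fin n → Fin l → ℝ | ∑ i, x i j = 1 / (l : ℝ)}) ∩
        ((⋂ i, ⋂ j, {x : Fin n → Fin l → ℝ | 0 ≤ x i j}) ∩
         (⋂ i, ⋂ j, {x : Fin n → Fin l → ℝ |
            vC i j = 0 → mx vC j = 1 → x i j = 0})) := by
    ext x
    simp only [XS, Set.mem_inter_iff, Set.mem_iInter, Set.mem_setOf_eq]
    tauto
  rw [h1]
  refine IsClosed.inter (isClosed_iInter fun j => ?_)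
    (IsClosed.inter (isClosed_iInter fun i => isClosed_iInter fun j => ?_)
      (isClosed_iInter fun i => isClosed_iInter fun j => ?_))
  · exact isClosed_eq (continuous_finset_sum _ fun i _ => hc i j) continuous_const
  · exact isClosed_le continuous_const (hc i j)
  · by_cases hv : vC i j = 0
    · by_cases hm : mx vC j = 1
      · have : {x : Fin n → Fin l → ℝ | vC i j = 0 → mx vC j = 1 → x i j = 0}
            = {x : Fin n → Fin l → ℝ | x i j = 0} := by
          ext x; simp [hv, hm]
        rw [this]
        exact isClosed_eq (hc i j) continuous_const
      · have : {x : Fin n → Fin l → ℝ | vC i j = 0 → mx vC j = 1 → x i j = 0}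
            = Set.univ := by
          ext x; simp [hm]
        rw [this]; exact isClosed_univ
    · have : {x : Fin n → Fin l → ℝ | vC i j = 0 → mx vC j = 1 → x i j = 0}
          = Set.univ := by
        ext x; simp [hv]
      rw [this]; exact isClosed_univ

lemma XS_compact : IsCompact (XS (n := n) (l := l) vC) := by
  have hK : IsCompact (Set.pi Set.univ fun _ : Fin n =>
      Set.pi Set.univ fun _ : Fin l => Set.Icc (0 : ℝ) (1 / (l : ℝ))) :=
    isCompact_univ_pi fun _ => isCompact_univ_pi fun _ => isCompact_Icc
  refine IsCompact.of_isClosed_subset hK (XS_closed vC) ?_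
  rintro x ⟨hx0, hxs, -⟩
  refine Set.mem_univ_pi.2 fun i => Set.mem_univ_pi.2 fun j => ?_
  refine ⟨hx0 i j, ?_⟩
  rw [← hxs j]
  exact Finset.single_le_sum (f := fun i' => x i' j) (fun i' _ => hx0 i' j)
    (Finset.mem_univ i)

end opt



end PFA

/-- when all agents' valuations are binary and linear, for every
symmetric strictly convex function `Φ : ℝ^N → ℝ` there exists a `Φ`-fair allocation
of the mixed goods, and one can choose it to satisfy condition (*). -/
theorem exists_phiFair {n m l : ℕ} (hn : 0 < n) (hl : 0 < l)
    (vM : Fin n → Fin m → ℝ) (vC : Fin n → Fin l → ℝ)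
    (hbinM : ∀ i g, vM i g = 0 ∨ vM i g = 1)
    (hbinC : ∀ i j, vC i j = 0 ∨ vC i j = 1)
    (Φ : (Fin n → ℝ) → ℝ)
    (hsym : ∀ (σ : Equiv.Perm (Fin n)) (z : Fin n → ℝ), Φ (z ∘ σ) = Φ z)
    (hconv : ∀ z w : Fin n → ℝ, z ≠ w → ∀ t : ℝ, 0 < t → t < 1 →
      Φ (fun i => t * z i + (1 - t) * w i) < t * Φ z + (1 - t) * Φ w) :
    ∃ A : Alloc n m, PhiFair vM vC Φ A ∧ CondStar l A := by
  classical
  -- Φ is convex, hence continuous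
  have hΦconv : ConvexOn ℝ Set.univ Φ := by
    refine ⟨convex_univ, ?_⟩
    intro z _ w _ a b ha hb hab
    have hsmul : a • z + b • w = fun i => a * z i + b * w i := by
      funext i; simp
    rcases eq_or_lt_of_le ha with ha0 | ha0
    · have hb1 : b = 1 := by linarith
      have : a • z + b • w = w := by
        funext i; rw [hsmul]; simp [← ha0, hb1]
      rw [this, ← ha0, hb1]; simp
    · rcases eq_or_lt_of_le hb with hb0 | hb0
      · have ha1 : a = 1 := by linarith
        have : a • z + b • w = z := by
          funext i; rw [hsmul]; simp [← hb0, ha1]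
        rw [this, ← hb0, ha1]; simp
      · by_cases hzw : z = w
        · subst hzw
          have h1 : a • z + b • z = z := by
            funext i
            rw [hsmul]
            show a * z i + b * z i = z i
            have h2 : a * z i + b * z i = (a + b) * z i := by ring
            rw [h2, hab, one_mul]
          rw [h1]
          simp only [smul_eq_mul]
          linarith [(by rw [← add_mul, hab, one_mul] : a * Φ z + b * Φ z = Φ z)]
        · have hba : b = 1 - a := by linarith
          have h := hconv z w hzw a ha0 (by linarith)
          have heq : a • z + b • w = fun i => a * z i + (1 - a) * w i := by
            rw [hsmul]; funext i; rw [hba]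
          rw [heq, hba]
          exact le_of_lt h
  have hΦcont : Continuous Φ := by
    have := hΦconv.continuousOn isOpen_univ
    exact continuousOn_univ.1 this
  -- canonical optimal assignment and division
  set f₀ : Fin m → Fin n := fun g => if h : ∃ i, vM i g = 1 then h.choose else ⟨0, hn⟩
    with hf₀def
  have hf₀ : PFA.OptF vM f₀ := by
    intro g
    by_cases h : ∃ i, vM i g = 1
    · rw [hf₀def]
      simp only [dif_pos h]
      rw [h.choose_spec, PFA.mx_eq_one h.choose_spec]
    · rw [hf₀def]
      simp only [dif_neg h]
      have h1 : vM ⟨0, hn⟩ g = 0 := by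
        rcases hbinM ⟨0, hn⟩ g with h' | h'
        · exact h'
        · exact absurd ⟨_, h'⟩ h
      have h2 : PFA.mx vM g = 0 := by
        unfold PFA.mx
        rw [if_neg h]
      rw [h1, h2]
  set pick : Fin l → Fin n := fun j => if h : ∃ i, vC i j = 1 then h.choose else ⟨0, hn⟩
    with hpickdef
  set x₀ : Fin n → Fin l → ℝ := fun i j => if i = pick j then 1 / (l : ℝ) else 0
    with hx₀def
  have hx₀ : x₀ ∈ PFA.XS vC := by
    refine ⟨fun i j => ?_, fun j => ?_, fun i j hv hm => ?_⟩
    · rw [hx₀def]; dsimp only; split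
      · positivity
      · exact le_refl 0
    · rw [hx₀def]; dsimp only
      rw [Finset.sum_ite_eq' Finset.univ (pick j) (fun _ => 1 / (l : ℝ))]
      simp
    · have hex : ∃ i, vC i j = 1 := by
        by_contra hne
        have : PFA.mx vC j = 0 := by unfold PFA.mx; rw [if_neg hne]
        rw [this] at hm; norm_num at hm
      have hpick : vC (pick j) j = 1 := by
        rw [hpickdef]; simp only [dif_pos hex]; exact hex.choose_spec
      have hne : i ≠ pick j := fun hc => by rw [hc, hpick] at hv; norm_num at hv
      rw [hx₀def]; dsimp only; rw [if_neg hne]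
  -- the compact set of utility vectors of utilitarian optimal allocations
  set T : Set (Fin n → ℝ) :=
    ⋃ f : Fin m → Fin n,
      {u | PFA.OptF vM f ∧ ∃ x ∈ PFA.XS vC, u = PFA.Psi vM vC f x} with hTdef
  have hTcpt : IsCompact T := by
    rw [hTdef]
    refine isCompact_iUnion fun f => ?_
    by_cases hf : PFA.OptF vM f
    · have : {u | PFA.OptF vM f ∧ ∃ x ∈ PFA.XS vC, u = PFA.Psi vM vC f x}
          = PFA.Psi vM vC f '' PFA.XS vC := by
        ext u
        simp only [Set.mem_setOf_eq, Set.mem_image, hf, true_and]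
        constructor
        · rintro ⟨x, hx, rfl⟩; exact ⟨x, hx, rfl⟩
        · rintro ⟨x, hx, rfl⟩; exact ⟨x, hx, rfl⟩
      rw [this]
      exact (PFA.XS_compact vC).image (PFA.Psi_continuous vM vC f)
    · have : {u | PFA.OptF vM f ∧ ∃ x ∈ PFA.XS vC, u = PFA.Psi vM vC f x} = ∅ := by
        ext u; simp [hf]
      rw [this]; exact isCompact_empty
  have hTne : T.Nonempty :=
    ⟨PFA.Psi vM vC f₀ x₀, Set.mem_iUnion.2 ⟨f₀, hf₀, x₀, hx₀, rfl⟩⟩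
  obtain ⟨u₀, hu₀T, hmin⟩ := hTcpt.exists_isMinOn hTne hΦcont.continuousOn
  rw [hTdef] at hu₀T
  obtain ⟨f₁, hmem⟩ := Set.mem_iUnion.1 hu₀T
  obtain ⟨hf₁, x₁, hx₁, hu₀eq⟩ := hmem
  subst hu₀eq
  obtain ⟨hx₁0, hx₁s, hx₁z⟩ := hx₁
  set A : Alloc n m := PFA.mkAlloc hl f₁ x₁ hx₁0 hx₁s with hAdef
  have hutilA : util vM vC A = PFA.Psi vM vC f₁ x₁ := PFA.util_mkAlloc vM vC hl f₁ hx₁0 hx₁s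
  have hsumA : ∑ i, util vM vC A i = PFA.maxTot vM vC := by
    rw [hutilA]
    exact PFA.sum_Psi vM vC hbinC hf₁ ⟨hx₁0, hx₁s, hx₁z⟩
  have hUO : UtilOpt vM vC A := fun A' =>
    le_trans (PFA.sum_util_le vM vC hbinM hbinC A') (le_of_eq hsumA.symm)
  refine ⟨A, ⟨hUO, ?_⟩, ?_⟩
  · intro A' hA'
    have hsum' : ∑ i, util vM vC A' i = PFA.maxTot vM vC := by
      refine le_antisymm (PFA.sum_util_le vM vC hbinM hbinC A') ?_
      have := hA' A
      rwa [hsumA] at this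
    obtain ⟨hOptF', hXS', hdec⟩ := PFA.util_decomp vM vC hbinM hbinC A' hsum'
    have hmem : util vM vC A' ∈ T :=
      Set.mem_iUnion.2 ⟨PFA.owner A', hOptF', _, hXS', hdec⟩
    rw [hutilA]
    exact hmin hmem
  · intro i j
    have hpc : A.piece i = PFA.pieceOf x₁ i := rfl
    by_cases hxij : x₁ i j = 0
    · left
      rw [hpc, PFA.pieceOf_inter hx₁0 hx₁s]
      have := PFA.lo_sub (x := x₁) i j
      rw [hxij] at this
      rw [show PFA.lo x₁ j ((i : ℕ) + 1) = PFA.lo x₁ j i from by linarith]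
      exact Set.Ico_self _
    · right
      rw [hpc, PFA.vol_pieceOf hx₁0 hx₁s]
      exact ENNReal.ofReal_pos.2 (lt_of_le_of_ne (hx₁0 i j) (Ne.symm hxij))
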